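/- arXiv:1204.4251 — 3 statements merged into one kernel-verified Lean document; each statement's English description precedes it below -/
import Mathlib

section
/- The vertex connectivity of the augmented cube AQ_3 equals 4. -/
/-- Flip the single bit at index `i` (paper bit `i+1`), i.e. the map `X ↦ X_{i+1}`. -/
def flipBit {n : ℕ} (i : Fin n) (X : Fin n → Bool) : Fin n → Bool :=
  fun j => if j = i then !(X j) else X j

/-- Flip all bits at indices `≤ i` (paper bits `i+1, i, …, 1`), i.e. the map `X ↦ X̄_{i+1}`. -/
def flipDown {n : ℕ} (i : Fin n) (X : Fin n → Bool) : Fin n → Bool :=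
  fun j => if j ≤ i then !(X j) else X j

lemma flipBit_flipBit {n : ℕ} (i : Fin n) (X : Fin n → Bool) :
    flipBit i (flipBit i X) = X := by
  funext j; by_cases h : j = i <;> simp [flipBit, h]

lemma flipDown_flipDown {n : ℕ} (i : Fin n) (X : Fin n → Bool) :
    flipDown i (flipDown i X) = X := by
  funext j; by_cases h : j ≤ i <;> simp [flipDown, h]

/-- The augmented cube `AQ_n`: vertices are `n`-bit strings; two distinct vertices `X, Y`
are adjacent iff `Y = X_i` for some `1 ≤ i ≤ n` (a hypercube edge) or `Y = X̄_i` for some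
`2 ≤ i ≤ n` (a complement edge).  Paper bit `i` corresponds to index `i - 1 : Fin n`. -/
def augCube (n : ℕ) : SimpleGraph (Fin n → Bool) where
  Adj X Y := X ≠ Y ∧
    ((∃ i : Fin n, Y = flipBit i X) ∨ (∃ i : Fin n, 1 ≤ i.val ∧ Y = flipDown i X))
  symm := by
    refine ⟨?_⟩
    rintro X Y ⟨hne, h⟩
    refine ⟨hne.symm, ?_⟩
    rcases h with ⟨i, rfl⟩ | ⟨i, hi, rfl⟩
    · exact Or.inl ⟨i, (flipBit_flipBit i X).symm⟩
    · exact Or.inr ⟨i, hi, (flipDown_flipDown i X).symm⟩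
  loopless := ⟨fun X h => h.1 rfl⟩


instance : DecidableRel (augCube 3).Adj := fun X Y =>
  inferInstanceAs (Decidable (X ≠ Y ∧
    ((∃ i : Fin 3, Y = flipBit i X) ∨ (∃ i : Fin 3, 1 ≤ i.val ∧ Y = flipDown i X))))

instance (s : Set (Fin 3 → Bool)) [DecidablePred (· ∈ s)] :
    DecidableRel ((augCube 3).induce s).Adj := fun a b =>
  inferInstanceAs (Decidable ((augCube 3).Adj a b))

section BFS
variable {V : Type*} [Fintype V] [DecidableEq V]

/-- One BFS step avoiding `F`. -/
def nstepA (G : SimpleGraph V) [DecidableRel G.Adj] (F : Finset V) (A : Finset V) : Finset V :=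
  A ∪ Finset.univ.filter (fun v => v ∉ F ∧ ∃ a ∈ A, G.Adj a v)

lemma nstepA_sound (G : SimpleGraph V) [DecidableRel G.Adj] (F : Finset V)
    (u : V) (hu : u ∈ (↑(Fᶜ) : Set V)) :
    ∀ (n : ℕ) (A : Finset V),
      (∀ a ∈ A, ∃ ha : a ∈ (↑(Fᶜ) : Set V),
        (G.induce (↑(Fᶜ) : Set V)).Reachable ⟨u, hu⟩ ⟨a, ha⟩) →
      ∀ v ∈ (nstepA G F)^[n] A, ∃ hv : v ∈ (↑(Fᶜ) : Set V),
        (G.induce (↑(Fᶜ) : Set V)).Reachable ⟨u, hu⟩ ⟨v, hv⟩ := by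
  intro n
  induction n with
  | zero => exact fun A hA => hA
  | succ n ih =>
    intro A hA v hv
    rw [Function.iterate_succ_apply] at hv
    refine ih (nstepA G F A) ?_ v hv
    intro a ha
    rw [nstepA, Finset.mem_union, Finset.mem_filter] at ha
    rcases ha with h | ⟨-, hanF, b, hb, hadj⟩
    · exact hA a h
    · obtain ⟨hb', hr⟩ := hA b hb
      have ha' : a ∈ (↑(Fᶜ) : Set V) := by simpa using hanF
      exact ⟨ha', hr.trans (SimpleGraph.Adj.reachable (by exact hadj))⟩

lemma preconnected_of_hub (G : SimpleGraph V) [DecidableRel G.Adj] (F : Finset V) (n : ℕ)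
    (h : ∃ u, u ∉ F ∧ ∀ v, v ∉ F → v ∈ (nstepA G F)^[n] {u}) :
    (G.induce (↑(Fᶜ) : Set V)).Preconnected := by
  obtain ⟨u, hu, hall⟩ := h
  have hu' : u ∈ (↑(Fᶜ) : Set V) := by simpa using hu
  have key : ∀ v : (↑(Fᶜ) : Set V), (G.induce (↑(Fᶜ) : Set V)).Reachable ⟨u, hu'⟩ v := by
    rintro ⟨v, hv⟩
    have hvF : v ∉ F := by simpa using hv
    obtain ⟨hv', hr⟩ := nstepA_sound G F u hu' n {u}
      (by rintro a ha; rw [Finset.mem_singleton] at ha; subst ha; exact ⟨hu', .refl _⟩)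
      v (hall v hvF)
    exact hr
  exact fun x y => (key x).symm.trans (key y)

end BFS

/-- The even-parity vertices form a 4-cut. -/
def Scut : Finset (Fin 3 → Bool) :=
  Finset.univ.filter (fun X => ((X 0).xor ((X 1).xor (X 2))) = false)

set_option maxHeartbeats 4000000 in
set_option maxRecDepth 10000 in
lemma key3 : ∀ F : Finset (Fin 3 → Bool), F.card ≤ 3 →
    ∃ u, u ∉ F ∧ ∀ v, v ∉ F → v ∈ (nstepA (augCube 3) F)^[3] {u} := by
  decide

set_option maxHeartbeats 1000000 in
lemma Scut_disconnects : ¬ ((augCube 3).induce (↑Scut : Set (Fin 3 → Bool))ᶜ).Preconnected := by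
  decide

/-- The vertex connectivity of `AQ_3` equals `4`. -/
theorem augCube3_connectivity :
    IsLeast {k : ℕ | ∃ S : Set (Fin 3 → Bool),
      S.ncard = k ∧ ¬ ((augCube 3).induce Sᶜ).Connected} 4 := by
  constructor
  · refine ⟨(↑Scut : Set (Fin 3 → Bool)), ?_, ?_⟩
    · rw [Set.ncard_coe_finset]; decide
    · intro hc
      exact Scut_disconnects hc.preconnected
  · rintro k ⟨S, hcard, hconn⟩
    by_contra hlt
    push_neg at hlt
    have hk3 : k ≤ 3 := by omega
    have hSfin : S.Finite := S.toFinite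
    set F : Finset (Fin 3 → Bool) := hSfin.toFinset with hF
    have hFS : (↑F : Set (Fin 3 → Bool)) = S := hSfin.coe_toFinset
    have hFcard : F.card ≤ 3 := by
      rw [← hcard] at hk3
      rwa [Set.ncard_eq_toFinset_card S hSfin] at hk3
    have hpre : ((augCube 3).induce (↑(Fᶜ) : Set (Fin 3 → Bool))).Preconnected :=
      preconnected_of_hub (augCube 3) F 3 (key3 F hFcard)
    have hcompl : (↑(Fᶜ) : Set (Fin 3 → Bool)) = Sᶜ := by
      rw [Finset.coe_compl, hFS]
    rw [hcompl] at hpre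
    have hne : Sᶜ.Nonempty := by
      rcases Set.eq_empty_or_nonempty Sᶜ with h | h
      · have : S = Set.univ := by
          rw [← Set.compl_empty, ← h, compl_compl]
        have : S.ncard = 8 := by
          rw [this, Set.ncard_univ]
          simp [Nat.card_eq_fintype_card]
        omega
      · exact h
    have := hne.to_subtype
    exact hconn (SimpleGraph.Connected.mk hpre)
end

section
/- Let n ≥ 3 and let X be a vertex of the augmented cube AQ_n. For 2 ≤ i ≤ n, the set of common neighbors of X and X̄_i in AQ_n equals {X_i, X_{i+1}, X̄_{i−1}, X̄_{i+1}} if 2 ≤ i ≤ n−1, and equals {X̄_{n−1}, X_n} if i = n. In particular, X and X̄_i have exactly four common neighbors when 2 ≤ i ≤ n−1 and exactly two common neighbors when i = n. -/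
/-! ### Auxiliary lemmas -/

lemma pt_flipBit {n : ℕ} (a : Fin n) (X : Fin n → Bool) (j : Fin n) :
    flipBit a X j = xor (X j) (decide (j.val = a.val)) := by
  simp only [flipBit]
  by_cases h : j = a
  · simp [h]
  · simp [h, Fin.val_ne_of_ne h]

lemma pt_flipDown {n : ℕ} (b : Fin n) (X : Fin n → Bool) (j : Fin n) :
    flipDown b X j = xor (X j) (decide (j.val ≤ b.val)) := by
  simp only [flipDown, Fin.le_def]
  by_cases h : j.val ≤ b.val <;> simp [h]

lemma cancel3 (x : Bool) (p q r : Prop) [Decidable p] [Decidable q] [Decidable r]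
    (h : xor x (decide p) = xor (xor x (decide q)) (decide r)) : p ↔ ¬(q ↔ r) := by
  cases x <;> by_cases hq : q <;> by_cases hr : r <;>
    simp [hq, hr] at h ⊢ <;> simp_all

lemma xor3_ext (x : Bool) (p q r : Prop) [Decidable p] [Decidable q] [Decidable r]
    (h : ¬(p ↔ q) ↔ r) :
    xor (xor x (decide p)) (decide q) = xor x (decide r) := by
  by_cases hp : p <;> by_cases hq : q <;> simp [hp, hq] at h ⊢ <;> simp [h]

lemma xor_decide_inj (x : Bool) (p q : Prop) [Decidable p] [Decidable q]
    (h : xor x (decide p) = xor x (decide q)) : p ↔ q := by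
  cases x <;> by_cases hp : p <;> by_cases hq : q <;> simp [hp, hq] at h ⊢

lemma xor_decide_eq_self (x : Bool) (p : Prop) [Decidable p]
    (h : xor x (decide p) = x) : ¬ p := by
  cases x <;> by_cases hp : p <;> simp [hp] at h ⊢

lemma flipBit_ne {n : ℕ} (a : Fin n) (X : Fin n → Bool) : flipBit a X ≠ X := by
  intro h
  have := congrFun h a
  simp [flipBit] at this

lemma flipDown_ne {n : ℕ} (b : Fin n) (X : Fin n → Bool) : flipDown b X ≠ X := by
  intro h
  set z : Fin n := ⟨0, Nat.lt_of_le_of_lt (Nat.zero_le _) b.isLt⟩ with hz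
  have hpt := congrFun h z
  rw [pt_flipDown] at hpt
  have := xor_decide_eq_self _ _ hpt
  have hzv : z.val = 0 := rfl
  omega

lemma flipDown_eq_flipBit {n : ℕ} (b : Fin n) (hb : b.val = 0) (X : Fin n → Bool) :
    flipDown b X = flipBit b X := by
  funext j
  rw [pt_flipDown, pt_flipBit]
  congr 1
  simp only [decide_eq_decide]
  omega

lemma adj_flipBit {n : ℕ} (a : Fin n) (X : Fin n → Bool) :
    (augCube n).Adj X (flipBit a X) :=
  ⟨fun h => flipBit_ne a X h.symm, Or.inl ⟨a, rfl⟩⟩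

lemma adj_flipDown {n : ℕ} (b : Fin n) (X : Fin n → Bool) :
    (augCube n).Adj X (flipDown b X) := by
  refine ⟨fun h => flipDown_ne b X h.symm, ?_⟩
  by_cases hb : 1 ≤ b.val
  · exact Or.inr ⟨b, hb, rfl⟩
  · exact Or.inl ⟨b, by rw [flipDown_eq_flipBit b (by omega) X]⟩

lemma flipDown_flipDown_eq_flipBit {n : ℕ} (b c : Fin n) (h : b.val + 1 = c.val)
    (X : Fin n → Bool) : flipDown b (flipDown c X) = flipBit c X := by
  funext j
  rw [pt_flipDown, pt_flipDown, pt_flipBit]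
  exact xor3_ext _ _ _ _ (by omega)

lemma flipDown_flipDown_eq_flipBit' {n : ℕ} (b c : Fin n) (h : c.val + 1 = b.val)
    (X : Fin n → Bool) : flipDown b (flipDown c X) = flipBit b X := by
  funext j
  rw [pt_flipDown, pt_flipDown, pt_flipBit]
  exact xor3_ext _ _ _ _ (by omega)

lemma flipBit_flipDown_eq_flipDown {n : ℕ} (c d : Fin n) (h : d.val + 1 = c.val)
    (X : Fin n → Bool) : flipBit c (flipDown c X) = flipDown d X := by
  funext j
  rw [pt_flipBit, pt_flipDown, pt_flipDown]
  exact xor3_ext _ _ _ _ (by omega)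

lemma flipBit_flipDown_eq_flipDown' {n : ℕ} (a c : Fin n) (h : c.val + 1 = a.val)
    (X : Fin n → Bool) : flipBit a (flipDown c X) = flipDown a X := by
  funext j
  rw [pt_flipBit, pt_flipDown, pt_flipDown]
  exact xor3_ext _ _ _ _ (by omega)

lemma flipBit_ne_flipBit {n : ℕ} (a b : Fin n) (h : a.val ≠ b.val) (X : Fin n → Bool) :
    flipBit a X ≠ flipBit b X := by
  intro he
  have hpt := congrFun he a
  rw [pt_flipBit, pt_flipBit] at hpt
  have := xor_decide_inj _ _ _ hpt
  omega

lemma flipBit_ne_flipDown {n : ℕ} (a b : Fin n) (h : 0 < a.val) (X : Fin n → Bool) :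
    flipBit a X ≠ flipDown b X := by
  intro he
  set z : Fin n := ⟨0, Nat.lt_of_le_of_lt (Nat.zero_le _) a.isLt⟩ with hz
  have hpt := congrFun he z
  rw [pt_flipBit, pt_flipDown] at hpt
  have := xor_decide_inj _ _ _ hpt
  have hzv : z.val = 0 := rfl
  omega

lemma flipDown_ne_flipDown {n : ℕ} (b c : Fin n) (h : b.val < c.val) (X : Fin n → Bool) :
    flipDown b X ≠ flipDown c X := by
  intro he
  have hpt := congrFun he c
  rw [pt_flipDown, pt_flipDown] at hpt
  have := xor_decide_inj _ _ _ hpt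
  omega

/-- Let `n ≥ 3`, `X` a vertex of `AQ_n` and `2 ≤ i ≤ n` (paper bit `i` is index `i - 1`).
The common neighbors of `X` and `X̄_i` are `{X_i, X_(i+1), X̄_(i-1), X̄_(i+1)}` (four
vertices) if `2 ≤ i ≤ n - 1`, and `{X̄_(n-1), X_n}` (two vertices) if `i = n`. -/
theorem augCube_common_neighbors_complement_edge (n : ℕ) (hn : 3 ≤ n) (X : Fin n → Bool)
    (i : ℕ) (h1 : 2 ≤ i) (h2 : i ≤ n) :
    (∀ hin : i ≤ n - 1,
      {Z | (augCube n).Adj X Z ∧ (augCube n).Adj (flipDown ⟨i - 1, by omega⟩ X) Z} =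
        {flipBit ⟨i - 1, by omega⟩ X, flipBit ⟨i, by omega⟩ X,
          flipDown ⟨i - 2, by omega⟩ X, flipDown ⟨i, by omega⟩ X} ∧
      {Z | (augCube n).Adj X Z ∧ (augCube n).Adj (flipDown ⟨i - 1, by omega⟩ X) Z}.ncard = 4) ∧
    (i = n →
      {Z | (augCube n).Adj X Z ∧ (augCube n).Adj (flipDown ⟨i - 1, by omega⟩ X) Z} =
        {flipDown ⟨n - 2, by omega⟩ X, flipBit ⟨n - 1, by omega⟩ X} ∧
      {Z | (augCube n).Adj X Z ∧ (augCube n).Adj (flipDown ⟨i - 1, by omega⟩ X) Z}.ncard = 2) := by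
  constructor
  · -- case 2 ≤ i ≤ n - 1
    intro hin
    have hset : {Z | (augCube n).Adj X Z ∧ (augCube n).Adj (flipDown ⟨i - 1, by omega⟩ X) Z} =
        {flipBit ⟨i - 1, by omega⟩ X, flipBit ⟨i, by omega⟩ X,
          flipDown ⟨i - 2, by omega⟩ X, flipDown ⟨i, by omega⟩ X} := by
      ext Z
      simp only [Set.mem_setOf_eq, Set.mem_insert_iff, Set.mem_singleton_iff]
      constructor
      · rintro ⟨⟨hne1, hZX⟩, ⟨hne2, hZY⟩⟩
        rcases hZX with ⟨a, rfl⟩ | ⟨b, hb, rfl⟩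
        · rcases hZY with ⟨a', hA⟩ | ⟨b', hb', hB⟩
          · -- A: Z = flipBit a X = flipBit a' Y
            have key : ∀ j : ℕ, j < n → ((j = a.val) ↔ ¬((j ≤ i - 1) ↔ (j = a'.val))) := by
              intro j hj
              have hpt := congrFun hA ⟨j, hj⟩
              rw [pt_flipBit, pt_flipBit, pt_flipDown] at hpt
              exact cancel3 _ _ _ _ hpt
            have k0 := key 0 (by omega); have k1 := key 1 (by omega)
            have k2 := key 2 (by omega)
            have hcase : i = 2 ∧ (a.val = i - 1 ∨ a.val = 0) := by omega
            rcases hcase with ⟨hi2, ha | ha⟩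
            · left
              rw [show a = (⟨i - 1, by omega⟩ : Fin n) from Fin.ext (show a.val = i - 1 by omega)]
            · right; right; left
              rw [show a = (⟨i - 2, by omega⟩ : Fin n) from Fin.ext (show a.val = i - 2 by omega)]
              exact (flipDown_eq_flipBit ⟨i - 2, by omega⟩ (show i - 2 = 0 by omega) X).symm
          · -- B: Z = flipBit a X = flipDown b' Y
            have hb'lt : b'.val < n := b'.isLt
            have key : ∀ j : ℕ, j < n → ((j = a.val) ↔ ¬((j ≤ i - 1) ↔ (j ≤ b'.val))) := by
              intro j hj
              have hpt := congrFun hB ⟨j, hj⟩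
              rw [pt_flipBit, pt_flipDown, pt_flipDown] at hpt
              exact cancel3 _ _ _ _ hpt
            have ka := key a.val a.isLt
            have k1 := key (i - 2) (by omega); have k2 := key (i - 1) (by omega)
            have k3 := key (b'.val - 1) (by omega); have k4 := key b'.val (by omega)
            have hcase : (a.val = i - 1 ∧ b'.val = i - 2) ∨ (a.val = i ∧ b'.val = i) := by
              omega
            rcases hcase with ⟨ha, _⟩ | ⟨ha, _⟩
            · left
              rw [show a = (⟨i - 1, by omega⟩ : Fin n) from Fin.ext (show a.val = i - 1 by omega)]
            · right; left
              rw [show a = (⟨i, by omega⟩ : Fin n) from Fin.ext (show a.val = i by omega)]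
        · rcases hZY with ⟨a', hA⟩ | ⟨b', hb', hB⟩
          · -- C: Z = flipDown b X = flipBit a' Y
            have halt : a'.val < n := a'.isLt
            have key : ∀ j : ℕ, j < n → ((j ≤ b.val) ↔ ¬((j ≤ i - 1) ↔ (j = a'.val))) := by
              intro j hj
              have hpt := congrFun hA ⟨j, hj⟩
              rw [pt_flipDown, pt_flipBit, pt_flipDown] at hpt
              exact cancel3 _ _ _ _ hpt
            have ka := key a'.val (by omega)
            have k1 := key (i - 2) (by omega); have k2 := key (i - 1) (by omega)
            have k3 := key (b.val - 1) (by omega); have k4 := key b.val b.isLt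
            have hcase : (b.val = i - 2 ∧ a'.val = i - 1) ∨ (b.val = i ∧ a'.val = i) := by
              omega
            rcases hcase with ⟨hbv, _⟩ | ⟨hbv, _⟩
            · right; right; left
              rw [show b = (⟨i - 2, by omega⟩ : Fin n) from Fin.ext (show b.val = i - 2 by omega)]
            · right; right; right
              rw [show b = (⟨i, by omega⟩ : Fin n) from Fin.ext (show b.val = i by omega)]
          · -- D: impossible
            exfalso
            have hpt := congrFun hB ⟨0, by omega⟩
            rw [pt_flipDown, pt_flipDown, pt_flipDown] at hpt
            have key : ((0 : ℕ) ≤ b.val) ↔ ¬(((0 : ℕ) ≤ i - 1) ↔ ((0 : ℕ) ≤ b'.val)) :=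
              cancel3 _ _ _ _ hpt
            omega
      · rintro (rfl | rfl | rfl | rfl)
        · refine ⟨adj_flipBit _ X, ?_⟩
          rw [← flipDown_flipDown_eq_flipBit (⟨i - 2, by omega⟩ : Fin n) ⟨i - 1, by omega⟩
            (show i - 2 + 1 = i - 1 by omega) X]
          exact adj_flipDown _ _
        · refine ⟨adj_flipBit _ X, ?_⟩
          rw [← flipDown_flipDown_eq_flipBit' (⟨i, by omega⟩ : Fin n) ⟨i - 1, by omega⟩
            (show i - 1 + 1 = i by omega) X]
          exact adj_flipDown _ _
        · refine ⟨adj_flipDown _ X, ?_⟩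
          rw [← flipBit_flipDown_eq_flipDown (⟨i - 1, by omega⟩ : Fin n) ⟨i - 2, by omega⟩
            (show i - 2 + 1 = i - 1 by omega) X]
          exact adj_flipBit _ _
        · refine ⟨adj_flipDown _ X, ?_⟩
          rw [← flipBit_flipDown_eq_flipDown' (⟨i, by omega⟩ : Fin n) ⟨i - 1, by omega⟩
            (show i - 1 + 1 = i by omega) X]
          exact adj_flipBit _ _
    refine ⟨hset, ?_⟩
    rw [hset]
    have d12 : flipBit (⟨i - 1, by omega⟩ : Fin n) X ≠ flipBit ⟨i, by omega⟩ X :=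
      flipBit_ne_flipBit _ _ (show i - 1 ≠ i by omega) X
    have d13 : flipBit (⟨i - 1, by omega⟩ : Fin n) X ≠ flipDown ⟨i - 2, by omega⟩ X :=
      flipBit_ne_flipDown _ _ (show 0 < i - 1 by omega) X
    have d14 : flipBit (⟨i - 1, by omega⟩ : Fin n) X ≠ flipDown ⟨i, by omega⟩ X :=
      flipBit_ne_flipDown _ _ (show 0 < i - 1 by omega) X
    have d23 : flipBit (⟨i, by omega⟩ : Fin n) X ≠ flipDown ⟨i - 2, by omega⟩ X :=
      flipBit_ne_flipDown _ _ (show 0 < i by omega) X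
    have d24 : flipBit (⟨i, by omega⟩ : Fin n) X ≠ flipDown ⟨i, by omega⟩ X :=
      flipBit_ne_flipDown _ _ (show 0 < i by omega) X
    have d34 : flipDown (⟨i - 2, by omega⟩ : Fin n) X ≠ flipDown ⟨i, by omega⟩ X :=
      flipDown_ne_flipDown _ _ (show i - 2 < i by omega) X
    rw [Set.ncard_insert_of_notMem (by
      simp only [Set.mem_insert_iff, Set.mem_singleton_iff]
      push_neg
      exact ⟨d12, d13, d14⟩)]
    rw [Set.ncard_insert_of_notMem (by
      simp only [Set.mem_insert_iff, Set.mem_singleton_iff]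
      push_neg
      exact ⟨d23, d24⟩)]
    rw [Set.ncard_pair d34]
  · -- case i = n
    intro hi
    rw [show (⟨i - 1, by omega⟩ : Fin n) = (⟨n - 1, by omega⟩ : Fin n) from
      Fin.ext (show i - 1 = n - 1 by omega)]
    have hset : {Z | (augCube n).Adj X Z ∧ (augCube n).Adj (flipDown ⟨n - 1, by omega⟩ X) Z} =
        {flipDown ⟨n - 2, by omega⟩ X, flipBit ⟨n - 1, by omega⟩ X} := by
      ext Z
      simp only [Set.mem_setOf_eq, Set.mem_insert_iff, Set.mem_singleton_iff]
      constructor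
      · rintro ⟨⟨hne1, hZX⟩, ⟨hne2, hZY⟩⟩
        rcases hZX with ⟨a, rfl⟩ | ⟨b, hb, rfl⟩
        · rcases hZY with ⟨a', hA⟩ | ⟨b', hb', hB⟩
          · -- A: impossible since n - 1 ≥ 2
            exfalso
            have key : ∀ j : ℕ, j < n → ((j = a.val) ↔ ¬((j ≤ n - 1) ↔ (j = a'.val))) := by
              intro j hj
              have hpt := congrFun hA ⟨j, hj⟩
              rw [pt_flipBit, pt_flipBit, pt_flipDown] at hpt
              exact cancel3 _ _ _ _ hpt
            have k0 := key 0 (by omega); have k1 := key 1 (by omega)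
            have k2 := key 2 (by omega)
            omega
          · -- B
            have hb'lt : b'.val < n := b'.isLt
            have key : ∀ j : ℕ, j < n → ((j = a.val) ↔ ¬((j ≤ n - 1) ↔ (j ≤ b'.val))) := by
              intro j hj
              have hpt := congrFun hB ⟨j, hj⟩
              rw [pt_flipBit, pt_flipDown, pt_flipDown] at hpt
              exact cancel3 _ _ _ _ hpt
            have ka := key a.val a.isLt
            have k1 := key (n - 2) (by omega); have k2 := key (n - 1) (by omega)
            have k3 := key (b'.val - 1) (by omega); have k4 := key b'.val (by omega)
            right
            rw [show a = (⟨n - 1, by omega⟩ : Fin n) from Fin.ext (show a.val = n - 1 by omega)]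
        · rcases hZY with ⟨a', hA⟩ | ⟨b', hb', hB⟩
          · -- C
            have halt : a'.val < n := a'.isLt
            have key : ∀ j : ℕ, j < n → ((j ≤ b.val) ↔ ¬((j ≤ n - 1) ↔ (j = a'.val))) := by
              intro j hj
              have hpt := congrFun hA ⟨j, hj⟩
              rw [pt_flipDown, pt_flipBit, pt_flipDown] at hpt
              exact cancel3 _ _ _ _ hpt
            have ka := key a'.val (by omega)
            have k1 := key (n - 2) (by omega); have k2 := key (n - 1) (by omega)
            have k3 := key (b.val - 1) (by omega); have k4 := key b.val b.isLt
            left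
            rw [show b = (⟨n - 2, by omega⟩ : Fin n) from Fin.ext (show b.val = n - 2 by omega)]
          · -- D: impossible
            exfalso
            have hpt := congrFun hB ⟨0, by omega⟩
            rw [pt_flipDown, pt_flipDown, pt_flipDown] at hpt
            have key : ((0 : ℕ) ≤ b.val) ↔ ¬(((0 : ℕ) ≤ n - 1) ↔ ((0 : ℕ) ≤ b'.val)) :=
              cancel3 _ _ _ _ hpt
            omega
      · rintro (rfl | rfl)
        · refine ⟨adj_flipDown _ X, ?_⟩
          rw [← flipBit_flipDown_eq_flipDown (⟨n - 1, by omega⟩ : Fin n) ⟨n - 2, by omega⟩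
            (show n - 2 + 1 = n - 1 by omega) X]
          exact adj_flipBit _ _
        · refine ⟨adj_flipBit _ X, ?_⟩
          rw [← flipDown_flipDown_eq_flipBit (⟨n - 2, by omega⟩ : Fin n) ⟨n - 1, by omega⟩
            (show n - 2 + 1 = n - 1 by omega) X]
          exact adj_flipDown _ _
    refine ⟨hset, ?_⟩
    rw [hset]
    exact Set.ncard_pair
      (flipBit_ne_flipDown (⟨n - 1, by omega⟩ : Fin n) ⟨n - 2, by omega⟩
        (show 0 < n - 1 by omega) X).symm
end

section
/- Let n ≥ 5, let X be a vertex of the augmented cube AQ_n, and let i, j be integers with 1 ≤ i < j ≤ n, so that P = (X_i, X, X_j) is a path of length two in AQ_n. Then |N_{AQ_n}(P)| = 6n − 13 if (i = 1 and j ∈ {2, 3}) or (i > 1 and j = i + 1), and |N_{AQ_n}(P)| = 6n − 12 otherwise. -/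
set_option maxHeartbeats 8000000


namespace AQ
variable {n : ℕ}
def bx (p q : Fin n → Bool) : Fin n → Bool := fun k => xor (p k) (q k)
def ee (i : Fin n) : Fin n → Bool := fun j => decide (j = i)
def dd (i : Fin n) : Fin n → Bool := fun j => decide (j ≤ i)
def zz : Fin n → Bool := fun _ => false
lemma bx_bx (p q : Fin n → Bool) : bx p (bx p q) = q := by funext j; simp [bx]
lemma bxr_inj (X : Fin n → Bool) : Function.Injective (fun m : Fin n → Bool => bx m X) := by
  intro x y h
  funext j
  have := congrFun h j
  simp only [bx] at this
  cases hX : X j <;> rw [hX] at this <;> revert this <;>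
    cases x j <;> cases y j <;> simp
lemma bx_zz (X : Fin n → Bool) : bx zz X = X := by funext j; simp [bx, zz]
lemma bx_cancel (p q X : Fin n → Bool) : bx (bx p q) (bx p X) = bx q X := by
  funext j; simp only [bx]; cases p j <;> cases q j <;> simp
lemma bx_shift (m p X : Fin n → Bool) : bx m (bx p X) = bx (bx p m) X := by
  funext j; simp only [bx]; cases p j <;> cases m j <;> simp
def MM (n : ℕ) : Finset (Fin n → Bool) :=
  (Finset.univ.image ee) ∪ ((Finset.univ.filter fun k : Fin n => 1 ≤ k.val).image dd)
lemma mem_MM {m : Fin n → Bool} :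
    m ∈ MM n ↔ (∃ k, m = ee k) ∨ (∃ k : Fin n, 1 ≤ k.val ∧ m = dd k) := by
  simp [MM, eq_comm, and_comm]
def Mx (c : Fin n) : Finset (Fin n → Bool) := (MM n).image (bx (ee c))
lemma mem_Mx {c : Fin n} {m : Fin n → Bool} : m ∈ Mx c ↔ bx (ee c) m ∈ MM n := by
  constructor
  · rintro hm
    obtain ⟨u, hu, rfl⟩ := Finset.mem_image.1 hm
    rwa [bx_bx]
  · intro h
    exact Finset.mem_image.2 ⟨bx (ee c) m, h, bx_bx _ _⟩
lemma funeq_iff {p q : Fin n → Bool} : p = q ↔ ∀ j, (p j = true ↔ q j = true) := by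
  constructor
  · intro h j; rw [h]
  · intro h; funext j; have := h j; cases hp : p j <;> cases hq : q j <;> simp_all
@[simp] lemma bx_eval (p q : Fin n → Bool) (j : Fin n) :
    bx p q j = true ↔ (p j = true ↔ ¬ q j = true) := by
  simp only [bx]; cases p j <;> cases q j <;> simp
@[simp] lemma ee_eval (i j : Fin n) : ee i j = true ↔ j.val = i.val := by
  simp [ee, Fin.ext_iff]
@[simp] lemma dd_eval (i j : Fin n) : dd i j = true ↔ j.val ≤ i.val := by
  simp only [dd, decide_eq_true_eq, Fin.le_def]
@[simp] lemma zz_eval (j : Fin n) : zz j = true ↔ False := by simp [zz]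
lemma inter_M_Mx (hn : 5 ≤ n) (c c' : Fin n) (hc' : c'.val = max 1 c.val) :
    MM n ∩ Mx c = {dd c', bx (ee c) (dd c')} := by
  have hc'1 : 1 ≤ c'.val := by omega
  ext m
  simp only [Finset.mem_inter, mem_Mx, Finset.mem_insert, Finset.mem_singleton]
  constructor
  · rintro ⟨hm, hm2⟩
    rw [mem_MM] at hm hm2
    rcases hm with ⟨k₁, rfl⟩ | ⟨m₁, hm₁, rfl⟩ <;>
      rcases hm2 with ⟨k₂, hk⟩ | ⟨m₂, hm₂, hk⟩ <;> rw [funeq_iff] at hk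
    · -- e, e : impossible
      exfalso
      have h1 := hk c; have h2 := hk k₁; have h3 := hk k₂
      simp at h1 h2 h3
      omega
    · -- e, d : c,k₁ ∈ {0,1}
      have h0 := hk ⟨0, by omega⟩; have h1 := hk ⟨1, by omega⟩
      have h2 := hk ⟨2, by omega⟩; have h3 := hk c; have h4 := hk k₁; have h5 := hk m₂
      simp at h0 h1 h2 h3 h4 h5
      right
      rw [funeq_iff]; intro j; simp; omega
    · -- d, e
      have h0 := hk ⟨0, by omega⟩; have h1 := hk ⟨1, by omega⟩
      have h2 := hk ⟨2, by omega⟩; have h3 := hk c; have h4 := hk k₂; have h5 := hk m₁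
      simp at h0 h1 h2 h3 h4 h5
      left
      rw [funeq_iff]; intro j; simp; omega
    · -- d, d
      have h0 := hk ⟨0, by omega⟩; have h1 := hk ⟨1, by omega⟩
      have h3 := hk c; have h4 := hk m₁; have h5 := hk m₂
      have h6 := hk ⟨m₁.val - 1, by omega⟩
      have h7 := hk ⟨min (m₁.val + 1) (n-1), by omega⟩
      have h8 := hk ⟨min (m₂.val + 1) (n-1), by omega⟩
      simp at h0 h1 h3 h4 h5 h6 h7 h8
      have D : (c.val = m₁.val ∧ m₂.val + 1 = m₁.val) ∨
          (c.val = m₁.val + 1 ∧ m₂.val = m₁.val + 1) := by omega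
      rcases D with ⟨d1, d2⟩ | ⟨d1, d2⟩
      · left; rw [funeq_iff]; intro j; simp; omega
      · right; rw [funeq_iff]; intro j; simp; omega
  · intro hm
    have hmem1 : dd c' ∈ MM n := mem_MM.2 (Or.inr ⟨c', hc'1, rfl⟩)
    have hkey : bx (ee c) (dd c') ∈ MM n := by
      rw [mem_MM]
      by_cases hc0 : c.val = 0
      · -- c' = 1, result = ee 1
        left; exact ⟨⟨1, by omega⟩, by rw [funeq_iff]; intro j; simp; omega⟩
      · by_cases hc1 : c.val = 1
        · -- c' = 1, result = ee 0
          left; exact ⟨⟨0, by omega⟩, by rw [funeq_iff]; intro j; simp; omega⟩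
        · -- c' = c ≥ 2, result = dd (c-1)
          right
          refine ⟨⟨c.val - 1, by omega⟩, by simp; omega, ?_⟩
          rw [funeq_iff]; intro j; simp; omega
    rcases hm with rfl | rfl
    · exact ⟨hmem1, hkey⟩
    · refine ⟨hkey, ?_⟩; rwa [bx_bx]

/-- generic case: `a + 2 ≤ b`, `3 ≤ b`. -/
lemma inter_Mx_Mx_gen (hn : 5 ≤ n) (a b : Fin n) (hab : a.val + 2 ≤ b.val) (hb3 : 3 ≤ b.val) :
    Mx a ∩ Mx b = {zz, bx (ee a) (ee b)} := by
  ext m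
  simp only [Finset.mem_inter, mem_Mx, Finset.mem_insert, Finset.mem_singleton]
  constructor
  · rintro ⟨hma, hmb⟩
    rw [mem_MM] at hma hmb
    rcases hma with ⟨k₁, hk1⟩ | ⟨m₁, hm₁, hk1⟩ <;>
      rcases hmb with ⟨k₂, hk2⟩ | ⟨m₂, hm₂, hk2⟩
    · -- (e,e)
      obtain rfl : m = bx (ee a) (ee k₁) := by rw [← hk1, bx_bx]
      rw [funeq_iff] at hk2
      have h1 := hk2 a; have h2 := hk2 b; have h3 := hk2 k₁; have h4 := hk2 k₂
      simp at h1 h2 h3 h4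
      have D : (k₁.val = a.val ∧ k₂.val = b.val) ∨ (k₁.val = b.val ∧ k₂.val = a.val) := by
        omega
      rcases D with ⟨d1, d2⟩ | ⟨d1, d2⟩
      · left; rw [funeq_iff]; intro j; simp; omega
      · right; rw [funeq_iff]; intro j; simp; omega
    · -- (e,d) : impossible
      obtain rfl : m = bx (ee a) (ee k₁) := by rw [← hk1, bx_bx]
      rw [funeq_iff] at hk2
      exfalso
      have h0 := hk2 ⟨0, by omega⟩; have h1 := hk2 ⟨1, by omega⟩
      have h2 := hk2 ⟨2, by omega⟩; have h3 := hk2 ⟨3, by omega⟩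
      have h4 := hk2 a; have h5 := hk2 b; have h6 := hk2 k₁; have h7 := hk2 m₂
      simp at h0 h1 h2 h3 h4 h5 h6 h7
      omega
    · -- (d,e) : impossible
      obtain rfl : m = bx (ee a) (dd m₁) := by rw [← hk1, bx_bx]
      rw [funeq_iff] at hk2
      exfalso
      have h0 := hk2 ⟨0, by omega⟩; have h1 := hk2 ⟨1, by omega⟩
      have h2 := hk2 ⟨2, by omega⟩; have h3 := hk2 ⟨3, by omega⟩
      have h4 := hk2 a; have h5 := hk2 b; have h6 := hk2 m₁; have h7 := hk2 k₂
      simp at h0 h1 h2 h3 h4 h5 h6 h7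
      omega
    · -- (d,d) : impossible
      obtain rfl : m = bx (ee a) (dd m₁) := by rw [← hk1, bx_bx]
      rw [funeq_iff] at hk2
      exfalso
      have h0 := hk2 ⟨0, by omega⟩
      have h4 := hk2 a; have h5 := hk2 b; have h6 := hk2 m₁
      have h8 := hk2 ⟨b.val - 1, by omega⟩
      have h9 := hk2 ⟨n - 1 - (n - 2 - m₁.val), by omega⟩
      have h11 := hk2 ⟨n - 1 - (n - 2 - a.val), by omega⟩
      simp at h0 h4 h5 h6 h8 h9 h11
      omega
  · intro hm
    rcases hm with rfl | rfl
    · constructor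
      · rw [mem_MM]; left
        exact ⟨a, by rw [funeq_iff]; intro j; simp⟩
      · rw [mem_MM]; left
        exact ⟨b, by rw [funeq_iff]; intro j; simp⟩
    · constructor
      · rw [bx_bx, mem_MM]; left; exact ⟨b, rfl⟩
      · rw [mem_MM]; left
        exact ⟨a, by rw [funeq_iff]; intro j; simp; omega⟩
/-- special case a=0, b=1, t=2 -/
lemma inter_Mx_Mx_01 (hn : 5 ≤ n) (a b t : Fin n) (ha : a.val = 0) (hb : b.val = 1)
    (ht : t.val = 2) :
    Mx a ∩ Mx b = {zz, bx (ee a) (ee b), bx (ee a) (ee t), bx (ee a) (dd t)} := by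
  ext m
  simp only [Finset.mem_inter, mem_Mx, Finset.mem_insert, Finset.mem_singleton]
  constructor
  · rintro ⟨hma, hmb⟩
    rw [mem_MM] at hma hmb
    rcases hma with ⟨k₁, hk1⟩ | ⟨m₁, hm₁, hk1⟩ <;>
      rcases hmb with ⟨k₂, hk2⟩ | ⟨m₂, hm₂, hk2⟩
    · -- (e,e)
      obtain rfl : m = bx (ee a) (ee k₁) := by rw [← hk1, bx_bx]
      rw [funeq_iff] at hk2
      have h1 := hk2 a; have h2 := hk2 b; have h3 := hk2 k₁; have h4 := hk2 k₂
      simp at h1 h2 h3 h4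
      have D : (k₁.val = a.val ∧ k₂.val = b.val) ∨ (k₁.val = b.val ∧ k₂.val = a.val) := by
        omega
      rcases D with ⟨d1, d2⟩ | ⟨d1, d2⟩
      · left; rw [funeq_iff]; intro j; simp; omega
      · right; left; rw [funeq_iff]; intro j; simp; omega
    · -- (e,d) : third element
      obtain rfl : m = bx (ee a) (ee k₁) := by rw [← hk1, bx_bx]
      rw [funeq_iff] at hk2
      have h0 := hk2 ⟨0, by omega⟩; have h1 := hk2 ⟨1, by omega⟩
      have h2 := hk2 ⟨2, by omega⟩; have h3 := hk2 ⟨3, by omega⟩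
      have h6 := hk2 k₁; have h7 := hk2 m₂
      simp at h0 h1 h2 h3 h6 h7
      right; right; left
      rw [funeq_iff]; intro j; simp; omega
    · -- (d,e) : fourth element
      obtain rfl : m = bx (ee a) (dd m₁) := by rw [← hk1, bx_bx]
      rw [funeq_iff] at hk2
      have h0 := hk2 ⟨0, by omega⟩; have h1 := hk2 ⟨1, by omega⟩
      have h2 := hk2 ⟨2, by omega⟩; have h3 := hk2 ⟨3, by omega⟩
      have h6 := hk2 m₁; have h7 := hk2 k₂
      simp at h0 h1 h2 h3 h6 h7
      right; right; right
      rw [funeq_iff]; intro j; simp; omega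
    · -- (d,d) : impossible
      obtain rfl : m = bx (ee a) (dd m₁) := by rw [← hk1, bx_bx]
      rw [funeq_iff] at hk2
      exfalso
      have h0 := hk2 ⟨0, by omega⟩
      simp at h0
      omega
  · intro hm
    rcases hm with rfl | rfl | rfl | rfl
    · exact ⟨mem_MM.2 (Or.inl ⟨a, by rw [funeq_iff]; intro j; simp⟩),
        mem_MM.2 (Or.inl ⟨b, by rw [funeq_iff]; intro j; simp⟩)⟩
    · refine ⟨by rw [bx_bx]; exact mem_MM.2 (Or.inl ⟨b, rfl⟩), ?_⟩
      exact mem_MM.2 (Or.inl ⟨a, by rw [funeq_iff]; intro j; simp; omega⟩)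
    · refine ⟨by rw [bx_bx]; exact mem_MM.2 (Or.inl ⟨t, rfl⟩), ?_⟩
      exact mem_MM.2 (Or.inr ⟨t, by omega, by rw [funeq_iff]; intro j; simp; omega⟩)
    · refine ⟨by rw [bx_bx]; exact mem_MM.2 (Or.inr ⟨t, by omega, rfl⟩), ?_⟩
      exact mem_MM.2 (Or.inl ⟨t, by rw [funeq_iff]; intro j; simp; omega⟩)

/-- special case a=0, b=2, o=1 -/
lemma inter_Mx_Mx_02 (hn : 5 ≤ n) (a b o : Fin n) (ha : a.val = 0) (hb : b.val = 2)
    (ho : o.val = 1) :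
    Mx a ∩ Mx b = {zz, bx (ee a) (ee b), bx (ee a) (ee o), bx (ee a) (dd b)} := by
  ext m
  simp only [Finset.mem_inter, mem_Mx, Finset.mem_insert, Finset.mem_singleton]
  constructor
  · rintro ⟨hma, hmb⟩
    rw [mem_MM] at hma hmb
    rcases hma with ⟨k₁, hk1⟩ | ⟨m₁, hm₁, hk1⟩ <;>
      rcases hmb with ⟨k₂, hk2⟩ | ⟨m₂, hm₂, hk2⟩
    · -- (e,e)
      obtain rfl : m = bx (ee a) (ee k₁) := by rw [← hk1, bx_bx]
      rw [funeq_iff] at hk2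
      have h1 := hk2 a; have h2 := hk2 b; have h3 := hk2 k₁; have h4 := hk2 k₂
      simp at h1 h2 h3 h4
      have D : (k₁.val = a.val ∧ k₂.val = b.val) ∨ (k₁.val = b.val ∧ k₂.val = a.val) := by
        omega
      rcases D with ⟨d1, d2⟩ | ⟨d1, d2⟩
      · left; rw [funeq_iff]; intro j; simp; omega
      · right; left; rw [funeq_iff]; intro j; simp; omega
    · -- (e,d) : third element
      obtain rfl : m = bx (ee a) (ee k₁) := by rw [← hk1, bx_bx]
      rw [funeq_iff] at hk2
      have h0 := hk2 ⟨0, by omega⟩; have h1 := hk2 ⟨1, by omega⟩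
      have h2 := hk2 ⟨2, by omega⟩; have h3 := hk2 ⟨3, by omega⟩
      have h6 := hk2 k₁; have h7 := hk2 m₂
      simp at h0 h1 h2 h3 h6 h7
      right; right; left
      rw [funeq_iff]; intro j; simp; omega
    · -- (d,e) : fourth element
      obtain rfl : m = bx (ee a) (dd m₁) := by rw [← hk1, bx_bx]
      rw [funeq_iff] at hk2
      have h0 := hk2 ⟨0, by omega⟩; have h1 := hk2 ⟨1, by omega⟩
      have h2 := hk2 ⟨2, by omega⟩; have h3 := hk2 ⟨3, by omega⟩
      have h6 := hk2 m₁; have h7 := hk2 k₂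
      simp at h0 h1 h2 h3 h6 h7
      right; right; right
      rw [funeq_iff]; intro j; simp; omega
    · -- (d,d) : impossible
      obtain rfl : m = bx (ee a) (dd m₁) := by rw [← hk1, bx_bx]
      rw [funeq_iff] at hk2
      exfalso
      have h0 := hk2 ⟨0, by omega⟩
      simp at h0
      omega
  · intro hm
    rcases hm with rfl | rfl | rfl | rfl
    · exact ⟨mem_MM.2 (Or.inl ⟨a, by rw [funeq_iff]; intro j; simp⟩),
        mem_MM.2 (Or.inl ⟨b, by rw [funeq_iff]; intro j; simp⟩)⟩
    · refine ⟨by rw [bx_bx]; exact mem_MM.2 (Or.inl ⟨b, rfl⟩), ?_⟩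
      exact mem_MM.2 (Or.inl ⟨a, by rw [funeq_iff]; intro j; simp; omega⟩)
    · refine ⟨by rw [bx_bx]; exact mem_MM.2 (Or.inl ⟨o, rfl⟩), ?_⟩
      exact mem_MM.2 (Or.inr ⟨b, by omega, by rw [funeq_iff]; intro j; simp; omega⟩)
    · refine ⟨by rw [bx_bx]; exact mem_MM.2 (Or.inr ⟨b, by omega, rfl⟩), ?_⟩
      exact mem_MM.2 (Or.inl ⟨o, by rw [funeq_iff]; intro j; simp; omega⟩)

/-- special case 1 ≤ a, b = a+1 -/
lemma inter_Mx_Mx_succ (hn : 5 ≤ n) (a b : Fin n) (ha : 1 ≤ a.val) (hb : b.val = a.val + 1) :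
    Mx a ∩ Mx b = {zz, bx (ee a) (ee b), dd a, bx (ee a) (dd b)} := by
  ext m
  simp only [Finset.mem_inter, mem_Mx, Finset.mem_insert, Finset.mem_singleton]
  constructor
  · rintro ⟨hma, hmb⟩
    rw [mem_MM] at hma hmb
    rcases hma with ⟨k₁, hk1⟩ | ⟨m₁, hm₁, hk1⟩ <;>
      rcases hmb with ⟨k₂, hk2⟩ | ⟨m₂, hm₂, hk2⟩
    · -- (e,e)
      obtain rfl : m = bx (ee a) (ee k₁) := by rw [← hk1, bx_bx]
      rw [funeq_iff] at hk2
      have h1 := hk2 a; have h2 := hk2 b; have h3 := hk2 k₁; have h4 := hk2 k₂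
      simp at h1 h2 h3 h4
      have D : (k₁.val = a.val ∧ k₂.val = b.val) ∨ (k₁.val = b.val ∧ k₂.val = a.val) := by
        omega
      rcases D with ⟨d1, d2⟩ | ⟨d1, d2⟩
      · left; rw [funeq_iff]; intro j; simp; omega
      · right; left; rw [funeq_iff]; intro j; simp; omega
    · -- (e,d) : third element (a=1, k₁=0, m₂=2)
      obtain rfl : m = bx (ee a) (ee k₁) := by rw [← hk1, bx_bx]
      rw [funeq_iff] at hk2
      have h0 := hk2 ⟨0, by omega⟩; have h1 := hk2 ⟨1, by omega⟩
      have h2 := hk2 ⟨2, by omega⟩; have h3 := hk2 ⟨3, by omega⟩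
      have h4 := hk2 a; have h5 := hk2 b; have h6 := hk2 k₁; have h7 := hk2 m₂
      simp at h0 h1 h2 h3 h4 h5 h6 h7
      right; right; left
      rw [funeq_iff]; intro j; simp; omega
    · -- (d,e) : fourth element (a=1, b=2, m₁=2, k₂=0)
      obtain rfl : m = bx (ee a) (dd m₁) := by rw [← hk1, bx_bx]
      rw [funeq_iff] at hk2
      have h0 := hk2 ⟨0, by omega⟩; have h1 := hk2 ⟨1, by omega⟩
      have h2 := hk2 ⟨2, by omega⟩; have h3 := hk2 ⟨3, by omega⟩
      have h4 := hk2 a; have h5 := hk2 b; have h6 := hk2 m₁; have h7 := hk2 k₂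
      simp at h0 h1 h2 h3 h4 h5 h6 h7
      right; right; right
      rw [funeq_iff]; intro j; simp; omega
    · -- (d,d) : third or fourth
      obtain rfl : m = bx (ee a) (dd m₁) := by rw [← hk1, bx_bx]
      rw [funeq_iff] at hk2
      have h0 := hk2 ⟨0, by omega⟩
      have h4 := hk2 a; have h5 := hk2 b; have h6 := hk2 m₁; have h7 := hk2 m₂
      have h8 := hk2 ⟨a.val - 1, by omega⟩
      have h9 := hk2 ⟨n - 1 - (n - 2 - m₁.val), by omega⟩
      have h10 := hk2 ⟨n - 1 - (n - 2 - b.val), by omega⟩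
      simp at h0 h4 h5 h6 h7 h8 h9 h10
      have D : (m₁.val = a.val - 1 ∧ 2 ≤ a.val ∧ m₂.val = b.val) ∨
          (m₁.val = b.val ∧ m₂.val = a.val - 1 ∧ 2 ≤ a.val) := by omega
      rcases D with ⟨d1, d2, d3⟩ | ⟨d1, d2, d3⟩
      · right; right; left; rw [funeq_iff]; intro j; simp; omega
      · right; right; right; rw [funeq_iff]; intro j; simp; omega
  · intro hm
    rcases hm with rfl | rfl | rfl | rfl
    · exact ⟨mem_MM.2 (Or.inl ⟨a, by rw [funeq_iff]; intro j; simp⟩),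
        mem_MM.2 (Or.inl ⟨b, by rw [funeq_iff]; intro j; simp⟩)⟩
    · refine ⟨by rw [bx_bx]; exact mem_MM.2 (Or.inl ⟨b, rfl⟩), ?_⟩
      exact mem_MM.2 (Or.inl ⟨a, by rw [funeq_iff]; intro j; simp; omega⟩)
    · constructor
      · rw [mem_MM]
        by_cases ha1 : a.val = 1
        · exact Or.inl ⟨⟨0, by omega⟩, by rw [funeq_iff]; intro j; simp; omega⟩
        · exact Or.inr ⟨⟨a.val - 1, by omega⟩, by simp; omega,
            by rw [funeq_iff]; intro j; simp; omega⟩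
      · exact mem_MM.2 (Or.inr ⟨b, by omega, by rw [funeq_iff]; intro j; simp; omega⟩)
    · refine ⟨by rw [bx_bx]; exact mem_MM.2 (Or.inr ⟨b, by omega, rfl⟩), ?_⟩
      rw [mem_MM]
      by_cases ha1 : a.val = 1
      · exact Or.inl ⟨⟨0, by omega⟩, by rw [funeq_iff]; intro j; simp; omega⟩
      · exact Or.inr ⟨⟨a.val - 1, by omega⟩, by simp; omega,
          by rw [funeq_iff]; intro j; simp; omega⟩

-- ne helper
lemma ne_fun {p q : Fin n → Bool} (j : Fin n) (h : ¬ (p j = true ↔ q j = true)) : p ≠ q :=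
  fun he => h (by rw [he])

lemma card2 {α : Type*} [DecidableEq α] {x y : α} (h : x ≠ y) : ({x, y} : Finset α).card = 2 := by
  rw [Finset.card_insert_of_notMem (by simp [h]), Finset.card_singleton]

lemma card3 {α : Type*} [DecidableEq α] {x y z : α} (h1 : x ≠ y) (h2 : x ≠ z) (h3 : y ≠ z) :
    ({x, y, z} : Finset α).card = 3 := by
  rw [Finset.card_insert_of_notMem (by simp [h1, h2]), card2 h3]

lemma card4 {α : Type*} [DecidableEq α] {w x y z : α} (h1 : w ≠ x) (h2 : w ≠ y) (h3 : w ≠ z)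
    (h4 : x ≠ y) (h5 : x ≠ z) (h6 : y ≠ z) : ({w, x, y, z} : Finset α).card = 4 := by
  rw [Finset.card_insert_of_notMem (by simp [h1, h2, h3]), card3 h4 h5 h6]

lemma card5 {α : Type*} [DecidableEq α] {v w x y z : α} (h1 : v ≠ w) (h2 : v ≠ x) (h3 : v ≠ y)
    (h4 : v ≠ z) (h5 : w ≠ x) (h6 : w ≠ y) (h7 : w ≠ z) (h8 : x ≠ y) (h9 : x ≠ z)
    (h10 : y ≠ z) : ({v, w, x, y, z} : Finset α).card = 5 := by
  rw [Finset.card_insert_of_notMem (by simp [h1, h2, h3, h4]), card4 h5 h6 h7 h8 h9 h10]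

lemma ee_injective : Function.Injective (ee (n := n)) := by
  intro x y h
  rw [funeq_iff] at h
  have := h x
  simp at this
  exact Fin.ext this

lemma dd_injective : Function.Injective (dd (n := n)) := by
  intro x y h
  rw [funeq_iff] at h
  have h1 := h x; have h2 := h y
  simp at h1 h2
  exact Fin.ext (by omega)

lemma card_MM (hn : 5 ≤ n) : (MM n).card = 2 * n - 1 := by
  have hdisj : Disjoint (Finset.univ.image (ee (n := n)))
      ((Finset.univ.filter fun k : Fin n => 1 ≤ k.val).image dd) := by
    rw [Finset.disjoint_left]
    rintro m hm1 hm2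
    simp only [Finset.mem_image, Finset.mem_filter, Finset.mem_univ, true_and] at hm1 hm2
    obtain ⟨k, rfl⟩ := hm1
    obtain ⟨c, hc, hcd⟩ := hm2
    rw [funeq_iff] at hcd
    have h1 := hcd ⟨0, by omega⟩; have h2 := hcd c
    simp at h1 h2
    omega
  have hfil : (Finset.univ.filter fun k : Fin n => 1 ≤ k.val) =
      Finset.univ.erase ⟨0, by omega⟩ := by
    ext k
    simp [Fin.ext_iff]
    omega
  rw [MM, Finset.card_union_of_disjoint hdisj,
    Finset.card_image_of_injective _ ee_injective,
    Finset.card_image_of_injective _ dd_injective, hfil,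
    Finset.card_erase_of_mem (Finset.mem_univ _)]
  simp
  omega

lemma card_Mx (hn : 5 ≤ n) (c : Fin n) : (Mx c).card = 2 * n - 1 := by
  rw [Mx, Finset.card_image_of_injective, card_MM hn]
  intro x y h
  have := congrArg (bx (ee c)) h
  rwa [bx_bx, bx_bx] at this

lemma core (hn : 5 ≤ n) (a b : Fin n) (hab : a.val < b.val) :
    ((MM n ∪ Mx a ∪ Mx b) \ {zz, ee a, ee b}).card =
      if (b.val = a.val + 1 ∨ (a.val = 0 ∧ b.val = 2)) then 6 * n - 13 else 6 * n - 12 := by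
  have hb1 : 1 ≤ b.val := by omega
  -- the three path-masks are in the union
  have hzz : zz ∈ Mx a := by
    rw [mem_Mx, mem_MM]
    exact Or.inl ⟨a, by rw [funeq_iff]; intro j; simp⟩
  have hsub : ({zz, ee a, ee b} : Finset (Fin n → Bool)) ⊆ MM n ∪ Mx a ∪ Mx b := by
    intro m hm
    simp only [Finset.mem_insert, Finset.mem_singleton] at hm
    rcases hm with rfl | rfl | rfl
    · exact Finset.mem_union_left _ (Finset.mem_union_right _ hzz)
    · exact Finset.mem_union_left _ (Finset.mem_union_left _ (mem_MM.2 (Or.inl ⟨a, rfl⟩)))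
    · exact Finset.mem_union_left _ (Finset.mem_union_left _ (mem_MM.2 (Or.inl ⟨b, rfl⟩)))
  have hcard3 : ({zz, ee a, ee b} : Finset (Fin n → Bool)).card = 3 :=
    card3 (ne_fun a (by simp only [bx_eval, ee_eval, dd_eval, zz_eval, Fin.val_mk, eq_self_iff_true, le_refl, iff_true, iff_false, true_iff, false_iff, not_true, not_false_iff, not_not] <;> omega))
      (ne_fun b (by simp only [bx_eval, ee_eval, dd_eval, zz_eval, Fin.val_mk, eq_self_iff_true, le_refl, iff_true, iff_false, true_iff, false_iff, not_true, not_false_iff, not_not] <;> omega))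
      (ne_fun a (by simp only [bx_eval, ee_eval, dd_eval, zz_eval, Fin.val_mk, eq_self_iff_true, le_refl, iff_true, iff_false, true_iff, false_iff, not_true, not_false_iff, not_not] <;> omega))
  -- |MM ∪ Mx a|
  have ha' : (⟨max 1 a.val, by omega⟩ : Fin n).val = max 1 a.val := rfl
  set a' : Fin n := ⟨max 1 a.val, by omega⟩ with ha'def
  have hIa : MM n ∩ Mx a = {dd a', bx (ee a) (dd a')} := inter_M_Mx hn a a' ha'
  have hIacard : (MM n ∩ Mx a).card = 2 := by
    rw [hIa]
    refine card2 ?_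
    intro h
    rw [funeq_iff] at h
    have h0 := h ⟨0, by omega⟩; have h1 := h a'
    simp only [bx_eval, ee_eval, dd_eval, zz_eval, Fin.val_mk] at h0 h1
    omega
  have hU1 : (MM n ∪ Mx a).card = 4 * n - 4 := by
    have := Finset.card_union_add_card_inter (MM n) (Mx a)
    rw [hIacard, card_MM hn, card_Mx hn] at this
    omega
  -- |MM ∩ Mx b| = 2, with b' = b
  have hb' : b.val = max 1 b.val := by omega
  have hIb : MM n ∩ Mx b = {dd b, bx (ee b) (dd b)} := inter_M_Mx hn b b hb'
  -- distribute
  have hdist : (MM n ∪ Mx a) ∩ Mx b = (MM n ∩ Mx b) ∪ (Mx a ∩ Mx b) :=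
    Finset.union_inter_distrib_right _ _ _
  -- total via the two-step inclusion-exclusion
  have htot := Finset.card_union_add_card_inter (MM n ∪ Mx a) (Mx b)
  rw [hU1, card_Mx hn, hdist, hIb] at htot
  rw [Finset.card_sdiff_of_subset hsub, hcard3]
  by_cases hsp : (b.val = a.val + 1 ∨ (a.val = 0 ∧ b.val = 2))
  · rw [if_pos hsp]
    -- special cases
    have hI2card : (({dd b, bx (ee b) (dd b)} : Finset (Fin n → Bool)) ∪ (Mx a ∩ Mx b)).card
        = 5 := by
      rcases hsp with hbs | ⟨ha0, hb2⟩
      · by_cases ha0 : a.val = 0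
        · -- a=0, b=1
          have hb1' : b.val = 1 := by omega
          set t : Fin n := ⟨2, by omega⟩ with htdef
          have ht : t.val = 2 := rfl
          rw [inter_Mx_Mx_01 hn a b t ha0 hb1' ht]
          have hdup : bx (ee a) (ee b) = dd b := by
            rw [funeq_iff]; intro j; simp; omega
          have hun : ({dd b, bx (ee b) (dd b)} : Finset (Fin n → Bool)) ∪
              {zz, bx (ee a) (ee b), bx (ee a) (ee t), bx (ee a) (dd t)} =
              {dd b, bx (ee b) (dd b), zz, bx (ee a) (ee t), bx (ee a) (dd t)} := by
            rw [hdup]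
            ext m
            simp only [Finset.mem_union, Finset.mem_insert, Finset.mem_singleton]
            tauto
          rw [hun]
          exact card5
            (ne_fun b (by simp only [bx_eval, ee_eval, dd_eval, zz_eval, Fin.val_mk, eq_self_iff_true, le_refl, iff_true, iff_false, true_iff, false_iff, not_true, not_false_iff, not_not] <;> omega)) (ne_fun ⟨0, by omega⟩ (by simp only [bx_eval, ee_eval, dd_eval, zz_eval, Fin.val_mk, eq_self_iff_true, le_refl, iff_true, iff_false, true_iff, false_iff, not_true, not_false_iff, not_not] <;> omega))
            (ne_fun t (by simp only [bx_eval, ee_eval, dd_eval, zz_eval, Fin.val_mk, eq_self_iff_true, le_refl, iff_true, iff_false, true_iff, false_iff, not_true, not_false_iff, not_not] <;> omega)) (ne_fun ⟨0, by omega⟩ (by simp only [bx_eval, ee_eval, dd_eval, zz_eval, Fin.val_mk, eq_self_iff_true, le_refl, iff_true, iff_false, true_iff, false_iff, not_true, not_false_iff, not_not] <;> omega))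
            (ne_fun ⟨0, by omega⟩ (by simp only [bx_eval, ee_eval, dd_eval, zz_eval, Fin.val_mk, eq_self_iff_true, le_refl, iff_true, iff_false, true_iff, false_iff, not_true, not_false_iff, not_not] <;> omega)) (ne_fun t (by simp only [bx_eval, ee_eval, dd_eval, zz_eval, Fin.val_mk, eq_self_iff_true, le_refl, iff_true, iff_false, true_iff, false_iff, not_true, not_false_iff, not_not] <;> omega))
            (ne_fun ⟨1, by omega⟩ (by simp only [bx_eval, ee_eval, dd_eval, zz_eval, Fin.val_mk, eq_self_iff_true, le_refl, iff_true, iff_false, true_iff, false_iff, not_true, not_false_iff, not_not] <;> omega)) (ne_fun ⟨0, by omega⟩ (by simp only [bx_eval, ee_eval, dd_eval, zz_eval, Fin.val_mk, eq_self_iff_true, le_refl, iff_true, iff_false, true_iff, false_iff, not_true, not_false_iff, not_not] <;> omega))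
            (ne_fun ⟨1, by omega⟩ (by simp only [bx_eval, ee_eval, dd_eval, zz_eval, Fin.val_mk, eq_self_iff_true, le_refl, iff_true, iff_false, true_iff, false_iff, not_true, not_false_iff, not_not] <;> omega)) (ne_fun ⟨0, by omega⟩ (by simp only [bx_eval, ee_eval, dd_eval, zz_eval, Fin.val_mk, eq_self_iff_true, le_refl, iff_true, iff_false, true_iff, false_iff, not_true, not_false_iff, not_not] <;> omega))
        · -- a ≥ 1, b = a+1
          have ha1 : 1 ≤ a.val := by omega
          rw [inter_Mx_Mx_succ hn a b ha1 hbs]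
          have hdup : bx (ee b) (dd b) = dd a := by
            rw [funeq_iff]; intro j; simp; omega
          have hun : ({dd b, bx (ee b) (dd b)} : Finset (Fin n → Bool)) ∪
              {zz, bx (ee a) (ee b), dd a, bx (ee a) (dd b)} =
              {dd b, dd a, zz, bx (ee a) (ee b), bx (ee a) (dd b)} := by
            rw [hdup]
            ext m
            simp only [Finset.mem_union, Finset.mem_insert, Finset.mem_singleton]
            tauto
          rw [hun]
          exact card5
            (ne_fun b (by simp only [bx_eval, ee_eval, dd_eval, zz_eval, Fin.val_mk, eq_self_iff_true, le_refl, iff_true, iff_false, true_iff, false_iff, not_true, not_false_iff, not_not] <;> omega)) (ne_fun ⟨0, by omega⟩ (by simp only [bx_eval, ee_eval, dd_eval, zz_eval, Fin.val_mk, eq_self_iff_true, le_refl, iff_true, iff_false, true_iff, false_iff, not_true, not_false_iff, not_not] <;> omega))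
            (ne_fun ⟨0, by omega⟩ (by simp only [bx_eval, ee_eval, dd_eval, zz_eval, Fin.val_mk, eq_self_iff_true, le_refl, iff_true, iff_false, true_iff, false_iff, not_true, not_false_iff, not_not] <;> omega)) (ne_fun a (by simp only [bx_eval, ee_eval, dd_eval, zz_eval, Fin.val_mk, eq_self_iff_true, le_refl, iff_true, iff_false, true_iff, false_iff, not_true, not_false_iff, not_not] <;> omega))
            (ne_fun ⟨0, by omega⟩ (by simp only [bx_eval, ee_eval, dd_eval, zz_eval, Fin.val_mk, eq_self_iff_true, le_refl, iff_true, iff_false, true_iff, false_iff, not_true, not_false_iff, not_not] <;> omega)) (ne_fun ⟨0, by omega⟩ (by simp only [bx_eval, ee_eval, dd_eval, zz_eval, Fin.val_mk, eq_self_iff_true, le_refl, iff_true, iff_false, true_iff, false_iff, not_true, not_false_iff, not_not] <;> omega))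
            (ne_fun a (by simp only [bx_eval, ee_eval, dd_eval, zz_eval, Fin.val_mk, eq_self_iff_true, le_refl, iff_true, iff_false, true_iff, false_iff, not_true, not_false_iff, not_not] <;> omega)) (ne_fun a (by simp only [bx_eval, ee_eval, dd_eval, zz_eval, Fin.val_mk, eq_self_iff_true, le_refl, iff_true, iff_false, true_iff, false_iff, not_true, not_false_iff, not_not] <;> omega))
            (ne_fun ⟨0, by omega⟩ (by simp only [bx_eval, ee_eval, dd_eval, zz_eval, Fin.val_mk, eq_self_iff_true, le_refl, iff_true, iff_false, true_iff, false_iff, not_true, not_false_iff, not_not] <;> omega)) (ne_fun ⟨0, by omega⟩ (by simp only [bx_eval, ee_eval, dd_eval, zz_eval, Fin.val_mk, eq_self_iff_true, le_refl, iff_true, iff_false, true_iff, false_iff, not_true, not_false_iff, not_not] <;> omega))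
      · -- a=0, b=2
        set o : Fin n := ⟨1, by omega⟩ with hodef
        have ho : o.val = 1 := rfl
        rw [inter_Mx_Mx_02 hn a b o ha0 hb2 ho]
        have hdup : bx (ee b) (dd b) = bx (ee a) (ee o) := by
          rw [funeq_iff]; intro j; simp; omega
        have hun : ({dd b, bx (ee b) (dd b)} : Finset (Fin n → Bool)) ∪
            {zz, bx (ee a) (ee b), bx (ee a) (ee o), bx (ee a) (dd b)} =
            {dd b, bx (ee a) (ee o), zz, bx (ee a) (ee b), bx (ee a) (dd b)} := by
          rw [hdup]
          ext m
          simp only [Finset.mem_union, Finset.mem_insert, Finset.mem_singleton]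
          tauto
        rw [hun]
        exact card5
          (ne_fun b (by simp only [bx_eval, ee_eval, dd_eval, zz_eval, Fin.val_mk, eq_self_iff_true, le_refl, iff_true, iff_false, true_iff, false_iff, not_true, not_false_iff, not_not] <;> omega)) (ne_fun ⟨0, by omega⟩ (by simp only [bx_eval, ee_eval, dd_eval, zz_eval, Fin.val_mk, eq_self_iff_true, le_refl, iff_true, iff_false, true_iff, false_iff, not_true, not_false_iff, not_not] <;> omega))
          (ne_fun ⟨1, by omega⟩ (by simp only [bx_eval, ee_eval, dd_eval, zz_eval, Fin.val_mk, eq_self_iff_true, le_refl, iff_true, iff_false, true_iff, false_iff, not_true, not_false_iff, not_not] <;> omega)) (ne_fun ⟨0, by omega⟩ (by simp only [bx_eval, ee_eval, dd_eval, zz_eval, Fin.val_mk, eq_self_iff_true, le_refl, iff_true, iff_false, true_iff, false_iff, not_true, not_false_iff, not_not] <;> omega))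
          (ne_fun ⟨0, by omega⟩ (by simp only [bx_eval, ee_eval, dd_eval, zz_eval, Fin.val_mk, eq_self_iff_true, le_refl, iff_true, iff_false, true_iff, false_iff, not_true, not_false_iff, not_not] <;> omega)) (ne_fun ⟨2, by omega⟩ (by simp only [bx_eval, ee_eval, dd_eval, zz_eval, Fin.val_mk, eq_self_iff_true, le_refl, iff_true, iff_false, true_iff, false_iff, not_true, not_false_iff, not_not] <;> omega))
          (ne_fun ⟨0, by omega⟩ (by simp only [bx_eval, ee_eval, dd_eval, zz_eval, Fin.val_mk, eq_self_iff_true, le_refl, iff_true, iff_false, true_iff, false_iff, not_true, not_false_iff, not_not] <;> omega)) (ne_fun ⟨2, by omega⟩ (by simp only [bx_eval, ee_eval, dd_eval, zz_eval, Fin.val_mk, eq_self_iff_true, le_refl, iff_true, iff_false, true_iff, false_iff, not_true, not_false_iff, not_not] <;> omega))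
          (ne_fun ⟨1, by omega⟩ (by simp only [bx_eval, ee_eval, dd_eval, zz_eval, Fin.val_mk, eq_self_iff_true, le_refl, iff_true, iff_false, true_iff, false_iff, not_true, not_false_iff, not_not] <;> omega)) (ne_fun ⟨0, by omega⟩ (by simp only [bx_eval, ee_eval, dd_eval, zz_eval, Fin.val_mk, eq_self_iff_true, le_refl, iff_true, iff_false, true_iff, false_iff, not_true, not_false_iff, not_not] <;> omega))
    rw [hI2card] at htot
    omega
  · rw [if_neg hsp]
    have hcond : a.val + 2 ≤ b.val ∧ 3 ≤ b.val := by
      rcases Nat.lt_or_ge b.val 3 with h | h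
      · exfalso; omega
      · omega
    have h4 : (({dd b, bx (ee b) (dd b)} : Finset (Fin n → Bool)) ∪ (Mx a ∩ Mx b)).card
        = 4 := by
      rw [inter_Mx_Mx_gen hn a b hcond.1 hcond.2]
      have hun : ({dd b, bx (ee b) (dd b)} : Finset (Fin n → Bool)) ∪ {zz, bx (ee a) (ee b)} =
          {dd b, bx (ee b) (dd b), zz, bx (ee a) (ee b)} := by
        ext m
        simp only [Finset.mem_union, Finset.mem_insert, Finset.mem_singleton]
        tauto
      rw [hun]
      exact
      card4
        (ne_fun b (by simp only [bx_eval, ee_eval, dd_eval, zz_eval, Fin.val_mk, eq_self_iff_true, le_refl, iff_true, iff_false, true_iff, false_iff, not_true, not_false_iff, not_not] <;> omega)) (ne_fun ⟨0, by omega⟩ (by simp only [bx_eval, ee_eval, dd_eval, zz_eval, Fin.val_mk, eq_self_iff_true, le_refl, iff_true, iff_false, true_iff, false_iff, not_true, not_false_iff, not_not] <;> omega))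
        (by
          intro h
          rw [funeq_iff] at h
          have h0 := h ⟨0, by omega⟩; have h1 := h ⟨1, by omega⟩
          simp only [bx_eval, ee_eval, dd_eval, zz_eval, Fin.val_mk] at h0 h1
          omega)
        (ne_fun ⟨0, by omega⟩ (by simp only [bx_eval, ee_eval, dd_eval, zz_eval, Fin.val_mk, eq_self_iff_true, le_refl, iff_true, iff_false, true_iff, false_iff, not_true, not_false_iff, not_not] <;> omega))
        (ne_fun b (by simp only [bx_eval, ee_eval, dd_eval, zz_eval, Fin.val_mk, eq_self_iff_true, le_refl, iff_true, iff_false, true_iff, false_iff, not_true, not_false_iff, not_not] <;> omega)) (ne_fun a (by simp only [bx_eval, ee_eval, dd_eval, zz_eval, Fin.val_mk, eq_self_iff_true, le_refl, iff_true, iff_false, true_iff, false_iff, not_true, not_false_iff, not_not] <;> omega))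
    rw [h4] at htot
    omega
lemma flipBit_bx (i : Fin n) (X : Fin n → Bool) : flipBit i X = bx (ee i) X := by
  funext j; by_cases h : j = i <;> simp [flipBit, bx, ee, h]

lemma flipDown_bx (i : Fin n) (X : Fin n → Bool) : flipDown i X = bx (dd i) X := by
  funext j; by_cases h : j ≤ i <;> simp [flipDown, bx, dd, h]

lemma MM_true {m : Fin n → Bool} (hm : m ∈ MM n) : ∃ t, m t = true := by
  rcases mem_MM.1 hm with ⟨k, rfl⟩ | ⟨k, hk, rfl⟩
  · exact ⟨k, by simp [ee]⟩
  · exact ⟨⟨0, k.pos⟩, by simp [dd, Fin.le_def]⟩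

lemma adj_iff (Y W : Fin n → Bool) :
    (augCube n).Adj Y W ↔ ∃ m ∈ MM n, W = bx m Y := by
  show (Y ≠ W ∧ ((∃ i : Fin n, W = flipBit i Y) ∨ (∃ i : Fin n, 1 ≤ i.val ∧ W = flipDown i Y))) ↔ _
  constructor
  · rintro ⟨hne, h | h⟩
    · obtain ⟨i, rfl⟩ := h
      exact ⟨ee i, mem_MM.2 (Or.inl ⟨i, rfl⟩), flipBit_bx i Y⟩
    · obtain ⟨i, hi, rfl⟩ := h
      exact ⟨dd i, mem_MM.2 (Or.inr ⟨i, hi, rfl⟩), flipDown_bx i Y⟩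
  · rintro ⟨m, hm, rfl⟩
    constructor
    · obtain ⟨t, ht⟩ := MM_true hm
      intro he
      have := congrFun he t
      simp [bx, ht] at this
    · rcases mem_MM.1 hm with ⟨k, rfl⟩ | ⟨k, hk, rfl⟩
      · exact Or.inl ⟨k, (flipBit_bx k Y).symm⟩
      · exact Or.inr ⟨k, hk, (flipDown_bx k Y).symm⟩

lemma main_aux (hn : 5 ≤ n) (X : Fin n → Bool) (a b : Fin n) (hab : a.val < b.val) :
    {W | W ∉ ({X, flipBit a X, flipBit b X} : Set (Fin n → Bool)) ∧
      ((augCube n).Adj X W ∨ (augCube n).Adj (flipBit a X) W ∨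
        (augCube n).Adj (flipBit b X) W)}.ncard =
      if (b.val = a.val + 1 ∨ (a.val = 0 ∧ b.val = 2)) then 6 * n - 13 else 6 * n - 12 := by
  have hA : flipBit a X = bx (ee a) X := flipBit_bx a X
  have hB : flipBit b X = bx (ee b) X := flipBit_bx b X
  have hset : {W | W ∉ ({X, flipBit a X, flipBit b X} : Set (Fin n → Bool)) ∧
      ((augCube n).Adj X W ∨ (augCube n).Adj (flipBit a X) W ∨
        (augCube n).Adj (flipBit b X) W)} =
      ↑(((MM n ∪ Mx a ∪ Mx b) \ {zz, ee a, ee b}).image (fun m => bx m X)) := by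
    ext W
    simp only [Set.mem_setOf_eq, Finset.coe_image, Set.mem_image, Finset.mem_coe,
      Finset.mem_sdiff, Finset.mem_union, Finset.mem_insert, Finset.mem_singleton,
      Set.mem_insert_iff, Set.mem_singleton_iff, not_or]
    constructor
    · rintro ⟨⟨hW1, hW2, hW3⟩, hadj⟩
      rcases hadj with h | h | h
      · obtain ⟨m, hm, rfl⟩ := (adj_iff X W).1 h
        refine ⟨m, ⟨Or.inl (Or.inl hm), ?_, ?_, ?_⟩, rfl⟩
        · rintro rfl; exact hW1 (bx_zz X)
        · rintro rfl; exact hW2 hA.symm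
        · rintro rfl; exact hW3 hB.symm
      · obtain ⟨m, hm, hW⟩ := (adj_iff (flipBit a X) W).1 h
        rw [hA, bx_shift] at hW
        subst hW
        refine ⟨bx (ee a) m, ⟨Or.inl (Or.inr (mem_Mx.2 (by rwa [bx_bx]))), ?_, ?_, ?_⟩, rfl⟩
        · rintro h'; rw [h'] at hW1; exact hW1 (bx_zz X)
        · rintro h'; rw [h'] at hW2; exact hW2 hA.symm
        · rintro h'; rw [h'] at hW3; exact hW3 hB.symm
      · obtain ⟨m, hm, hW⟩ := (adj_iff (flipBit b X) W).1 h
        rw [hB, bx_shift] at hW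
        subst hW
        refine ⟨bx (ee b) m, ⟨Or.inr (mem_Mx.2 (by rwa [bx_bx])), ?_, ?_, ?_⟩, rfl⟩
        · rintro h'; rw [h'] at hW1; exact hW1 (bx_zz X)
        · rintro h'; rw [h'] at hW2; exact hW2 hA.symm
        · rintro h'; rw [h'] at hW3; exact hW3 hB.symm
    · rintro ⟨m, ⟨hmem, hz, ha, hb⟩, rfl⟩
      have hinj := bxr_inj X
      refine ⟨⟨?_, ?_, ?_⟩, ?_⟩
      · intro he
        exact hz (hinj (show bx m X = bx zz X by rw [he, bx_zz]))
      · intro he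
        rw [hA] at he
        exact ha (hinj he)
      · intro he
        rw [hB] at he
        exact hb (hinj he)
      · rcases hmem with (hm | hm) | hm
        · exact Or.inl ((adj_iff X _).2 ⟨m, hm, rfl⟩)
        · refine Or.inr (Or.inl ((adj_iff (flipBit a X) _).2
            ⟨bx (ee a) m, mem_Mx.1 hm, ?_⟩))
          rw [hA, bx_cancel]
        · refine Or.inr (Or.inr ((adj_iff (flipBit b X) _).2
            ⟨bx (ee b) m, mem_Mx.1 hm, ?_⟩))
          rw [hB, bx_cancel]
  rw [hset, Set.ncard_coe_finset, Finset.card_image_of_injective _ (bxr_inj X),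
    core hn a b hab]
end AQ

/-- Let `n ≥ 5`, `X` a vertex of `AQ_n` and `1 ≤ i < j ≤ n` (paper bit `i` is index
`i - 1`), so that `P = (X_i, X, X_j)` is a path of length two.  Then `|N(P)| = 6n - 13`
if `(i = 1 ∧ j ∈ {2, 3}) ∨ (i > 1 ∧ j = i + 1)`, and `|N(P)| = 6n - 12` otherwise. -/
theorem augCube_hypercube_path_neighborhood (n : ℕ) (hn : 5 ≤ n) (X : Fin n → Bool)
    (i j : ℕ) (h1 : 1 ≤ i) (hij : i < j) (hjn : j ≤ n) :
    (((i = 1 ∧ (j = 2 ∨ j = 3)) ∨ (1 < i ∧ j = i + 1)) →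
      {W | W ∉ ({X, (flipBit ⟨i - 1, by omega⟩ X), (flipBit ⟨j - 1, by omega⟩ X)} : Set (Fin n → Bool)) ∧
      ((augCube n).Adj X W ∨ (augCube n).Adj (flipBit ⟨i - 1, by omega⟩ X) W ∨ (augCube n).Adj (flipBit ⟨j - 1, by omega⟩ X) W)}.ncard = 6 * n - 13) ∧
    (¬ ((i = 1 ∧ (j = 2 ∨ j = 3)) ∨ (1 < i ∧ j = i + 1)) →
      {W | W ∉ ({X, (flipBit ⟨i - 1, by omega⟩ X), (flipBit ⟨j - 1, by omega⟩ X)} : Set (Fin n → Bool)) ∧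
      ((augCube n).Adj X W ∨ (augCube n).Adj (flipBit ⟨i - 1, by omega⟩ X) W ∨ (augCube n).Adj (flipBit ⟨j - 1, by omega⟩ X) W)}.ncard = 6 * n - 12) := by
  have key := AQ.main_aux hn X ⟨i - 1, by omega⟩ ⟨j - 1, by omega⟩ (by simp only [Fin.val_mk]; omega)
  constructor
  · intro hc
    rw [key, if_pos (by simp only [Fin.val_mk]; omega)]
  · intro hc
    rw [key, if_neg (by simp only [Fin.val_mk]; omega)]
end
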